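/- Let A be a process whose program counter is inside the repeat loop of the Read Checking protocol and let B be a neighbour of A. From any configuration, every execution eventually reaches a configuration in which either B allows A to write, or A has exited the repeat loop. -/

import Mathlib

/-!
An operational model of the Read Checking protocol of Johnen, Lavallée, Lavault.

A network is a finite-degree system of processes; each process `p` has `deg p ≥ 1`
neighbours, enumerated by `nbr p : Fin (deg p) → Proc`.  Communication is via link
registers under read/write atomicity: `Write_{AB}` and `Read_{AB}` are owned
(written) by `A` and can be read by its neighbour `B`.
-/

structure Network where
  Proc : Type
  deg : Proc → ℕ
  deg_pos : ∀ p, 0 < deg p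
  nbr : (p : Proc) → Fin (deg p) → Proc
  nbr_ne : ∀ p i, nbr p i ≠ p
  nbr_inj : ∀ p, Function.Injective (nbr p)
  nbr_symm : ∀ p i, ∃ j, nbr (nbr p i) j = p

namespace RC

open Classical

/-- Program counter of a process with `n` neighbours running the Read Checking
protocol.  `write i` : about to execute `write(Write_{AB_i}, get_i)`;
`loop i k` : inside the repeat loop, about to execute the `k`-th atomic action
(`k = 0`: `r_i ← read(Write_{B_iA})`, `k = 1`: `write(Read_{AB_i}, r_i)`,
`k = 2`: `val_i ← read(Read_{B_iA})`, `k = 3`: `s_i ← read(Write_{AB_i})`,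
followed, after the last neighbour, by the (local) exit test `∀ i, val_i = s_i`). -/
inductive PC (n : ℕ) : Type
  | write : Fin n → PC n
  | loop : Fin n → Fin 4 → PC n

/-- The link registers: `W A B` is `Write_{AB}`, `R A B` is `Read_{AB}` (both owned by `A`). -/
inductive Reg (Proc : Type) : Type
  | W : Proc → Proc → Reg Proc
  | R : Proc → Proc → Reg Proc

/-- An atomic action: a single read of one register, or a single write of a value
into one register (read/write atomicity). -/
inductive Act (Proc Val : Type) : Type
  | read : Reg Proc → Act Proc Val
  | write : Reg Proc → Val → Act Proc Val

/-- A configuration: contents of all link registers, and local state of every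
process (program counter and the local variables `r_i`, `val_i`, `s_i`). -/
structure Config (Net : Network) (Val : Type) : Type where
  regW : Net.Proc → Net.Proc → Val
  regR : Net.Proc → Net.Proc → Val
  pc : (p : Net.Proc) → PC (Net.deg p)
  rv : (p : Net.Proc) → Fin (Net.deg p) → Val
  vv : (p : Net.Proc) → Fin (Net.deg p) → Val
  sv : (p : Net.Proc) → Fin (Net.deg p) → Val

def finSucc? {n : ℕ} (i : Fin n) : Option (Fin n) :=
  if h : i.1 + 1 < n then some ⟨i.1 + 1, h⟩ else none

noncomputable def upd2 {Proc : Type} {β : Type} (f : Proc → Proc → β) (a b : Proc) (v : β) :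
    Proc → Proc → β :=
  fun x y => if x = a ∧ y = b then v else f x y

/-- One atomic step of process `p`, labelled by the action performed.
The value written by `write(Write_{AB_i}, get_i)` is arbitrary: `get_i` is an
arbitrary helper function returning the next message to be sent. -/
inductive Step (Net : Network) (Val : Type) :
    Config Net Val → Net.Proc → Act Net.Proc Val → Config Net Val → Prop
  | writeW (c : Config Net Val) (p : Net.Proc) (i : Fin (Net.deg p)) (v : Val)
      (h : c.pc p = .write i) :
      Step Net Val c p (.write (.W p (Net.nbr p i)) v)
        { c with
          regW := upd2 c.regW p (Net.nbr p i) v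
          pc := Function.update c.pc p
            (match finSucc? i with
             | some j => PC.write j
             | none => PC.loop ⟨0, Net.deg_pos p⟩ 0) }
  | readNbrW (c : Config Net Val) (p : Net.Proc) (i : Fin (Net.deg p))
      (h : c.pc p = .loop i 0) :
      Step Net Val c p (.read (.W (Net.nbr p i) p))
        { c with
          rv := Function.update c.rv p (Function.update (c.rv p) i (c.regW (Net.nbr p i) p))
          pc := Function.update c.pc p (PC.loop i 1) }
  | writeR (c : Config Net Val) (p : Net.Proc) (i : Fin (Net.deg p))
      (h : c.pc p = .loop i 1) :
      Step Net Val c p (.write (.R p (Net.nbr p i)) (c.rv p i))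
        { c with
          regR := upd2 c.regR p (Net.nbr p i) (c.rv p i)
          pc := Function.update c.pc p (PC.loop i 2) }
  | readNbrR (c : Config Net Val) (p : Net.Proc) (i : Fin (Net.deg p))
      (h : c.pc p = .loop i 2) :
      Step Net Val c p (.read (.R (Net.nbr p i) p))
        { c with
          vv := Function.update c.vv p (Function.update (c.vv p) i (c.regR (Net.nbr p i) p))
          pc := Function.update c.pc p (PC.loop i 3) }
  | readOwnW (c : Config Net Val) (p : Net.Proc) (i : Fin (Net.deg p))
      (h : c.pc p = .loop i 3) :
      Step Net Val c p (.read (.W p (Net.nbr p i)))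
        { c with
          sv := Function.update c.sv p (Function.update (c.sv p) i (c.regW p (Net.nbr p i)))
          pc := Function.update c.pc p
            (match finSucc? i with
             | some j => PC.loop j 0
             | none =>
               if ∀ j, c.vv p j = Function.update (c.sv p) i (c.regW p (Net.nbr p i)) j
               then PC.write ⟨0, Net.deg_pos p⟩
               else PC.loop ⟨0, Net.deg_pos p⟩ 0) }

/-- An execution: an infinite sequence of configurations, starting from an
arbitrary configuration, where at each instant `t` the scheduled process
`sched t` performs the atomic action `act t`. -/
structure Exec (Net : Network) (Val : Type) : Type where
  cfg : ℕ → Config Net Val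
  sched : ℕ → Net.Proc
  act : ℕ → Act Net.Proc Val
  step : ∀ t, Step Net Val (cfg t) (sched t) (act t) (cfg (t + 1))

/-- A process is enabled when it can perform an atomic step. -/
def Enabled {Net : Network} {Val : Type} (c : Config Net Val) (p : Net.Proc) : Prop :=
  ∃ a c', Step Net Val c p a c'

/-- Fair scheduler: any process that can continuously perform an action
eventually performs one. -/
def Exec.Fair {Net : Network} {Val : Type} (e : Exec Net Val) : Prop :=
  ∀ p t, (∀ u, t ≤ u → Enabled (e.cfg u) p) → ∃ u, t ≤ u ∧ e.sched u = p

/-- The program counter of `p` is inside the repeat loop. -/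
def InLoop {Net : Network} {Val : Type} (c : Config Net Val) (p : Net.Proc) : Prop :=
  ∃ i k, c.pc p = PC.loop i k

/-- `B` allows `A` to write iff `Read_{BA} = Write_{AB}`. -/
def Allows {Net : Network} {Val : Type} (c : Config Net Val) (B A : Net.Proc) : Prop :=
  c.regR B A = c.regW A B

/-- `B` is a neighbour of `A`. -/
def Neighbour (Net : Network) (A B : Net.Proc) : Prop := ∃ i, Net.nbr A i = B

/-- At instant `t`, process `A` writes (some value) into its register `Write_{AB}`. -/
def WritesW {Net : Network} {Val : Type} (e : Exec Net Val) (A B : Net.Proc) (t : ℕ) : Prop :=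
  e.sched t = A ∧ ∃ v, e.act t = Act.write (Reg.W A B) v

/-- At instant `t`, process `B` reads from the register `Write_{AB}` of its neighbour `A`. -/
def ReadsW {Net : Network} {Val : Type} (e : Exec Net Val) (A B : Net.Proc) (t : ℕ) : Prop :=
  e.sched t = B ∧ e.act t = Act.read (Reg.W A B)

end RC

namespace RC

variable {Net : Network} {Val : Type}

lemma step_pc_ne {c c' : Config Net Val} {p : Net.Proc} {a : Act Net.Proc Val}
    (h : Step Net Val c p a c') {q : Net.Proc} (hq : q ≠ p) : c'.pc q = c.pc q := by
  classical
  cases h <;> simp [Function.update_of_ne hq]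

lemma step_rv_ne {c c' : Config Net Val} {p : Net.Proc} {a : Act Net.Proc Val}
    (h : Step Net Val c p a c') {q : Net.Proc} (hq : q ≠ p) : c'.rv q = c.rv q := by
  classical
  cases h <;> simp [Function.update_of_ne hq]

lemma step_regW_eq {c c' : Config Net Val} {p : Net.Proc} {a : Act Net.Proc Val}
    (h : Step Net Val c p a c') (x y : Net.Proc)
    (hx : ∀ i, c.pc x ≠ PC.write i) : c'.regW x y = c.regW x y := by
  cases h with
  | writeW i v hpc =>
      simp only [upd2]
      split_ifs with hxy
      · obtain ⟨rfl, -⟩ := hxy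
        exact absurd hpc (hx i)
      · rfl
  | readNbrW i hpc => rfl
  | writeR i hpc => rfl
  | readNbrR i hpc => rfl
  | readOwnW i hpc => rfl

lemma enabled_all (c : Config Net Val) (v0 : Val) (p : Net.Proc) : Enabled c p := by
  rcases hpc : c.pc p with i | ⟨i, k⟩
  · exact ⟨_, _, Step.writeW c p i v0 hpc⟩
  · rcases k with ⟨kv, hkv⟩
    interval_cases kv
    · exact ⟨_, _, Step.readNbrW c p i hpc⟩
    · exact ⟨_, _, Step.writeR c p i hpc⟩
    · exact ⟨_, _, Step.readNbrR c p i hpc⟩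
    · exact ⟨_, _, Step.readOwnW c p i hpc⟩

/-- Number of atomic steps (worst case) for a process to reach `loop j 0`. -/
def V {n : ℕ} (pc : PC n) (j : ℕ) : ℕ :=
  match pc with
  | .write i => (n - i.1) + 4 * j
  | .loop i k =>
      if 4 * i.1 + k.1 ≤ 4 * j then 4 * j - (4 * i.1 + k.1)
      else (4 * n - (4 * i.1 + k.1)) + n + 4 * j

lemma finSucc?_some {n : ℕ} (i : Fin n) (h : i.1 + 1 < n) :
    finSucc? i = some ⟨i.1 + 1, h⟩ := by simp [finSucc?, h]

lemma finSucc?_none {n : ℕ} (i : Fin n) (h : ¬ i.1 + 1 < n) :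
    finSucc? i = none := by simp [finSucc?, h]

lemma step_V_lt {c c' : Config Net Val} {B : Net.Proc} {a : Act Net.Proc Val}
    (h : Step Net Val c B a c') (j : Fin (Net.deg B))
    (hne : c.pc B ≠ PC.loop j 0) :
    V (c'.pc B) j.1 < V (c.pc B) j.1 := by
  classical
  have hj := j.isLt
  cases h with
  | writeW i v hpc =>
      have hi := i.isLt
      rw [hpc]
      simp only [Function.update_self]
      by_cases hlt : i.1 + 1 < Net.deg B
      · rw [finSucc?_some i hlt]
        simp only [V]
        omega
      · rw [finSucc?_none i hlt]
        simp only [V]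
        split_ifs <;> omega
  | readNbrW i hpc =>
      have hi := i.isLt
      have hij : i.1 ≠ j.1 := by
        intro hh
        exact hne (by rw [hpc, show i = j from Fin.ext hh])
      rw [hpc]
      simp only [Function.update_self, V, Fin.val_zero, Fin.val_one]
      split_ifs <;> omega
  | writeR i hpc =>
      have hi := i.isLt
      rw [hpc]
      simp only [Function.update_self, V, Fin.val_one, show ((2 : Fin 4)).1 = 2 from rfl]
      split_ifs <;> omega
  | readNbrR i hpc =>
      have hi := i.isLt
      rw [hpc]
      simp only [Function.update_self, V, show ((2 : Fin 4)).1 = 2 from rfl,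
        show ((3 : Fin 4)).1 = 3 from rfl]
      split_ifs <;> omega
  | readOwnW i hpc =>
      have hi := i.isLt
      rw [hpc]
      simp only [Function.update_self]
      by_cases hlt : i.1 + 1 < Net.deg B
      · rw [finSucc?_some i hlt]
        simp only [V, Fin.val_zero, show ((3 : Fin 4)).1 = 3 from rfl]
        split_ifs <;> omega
      · rw [finSucc?_none i hlt]
        simp only []
        split
        · simp only [V, show ((3 : Fin 4)).1 = 3 from rfl]
          split_ifs <;> omega
        · simp only [V, Fin.val_zero, show ((3 : Fin 4)).1 = 3 from rfl]
          split_ifs <;> omega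

lemma inv_loop0 {c c' : Config Net Val} {B : Net.Proc} {a : Act Net.Proc Val}
    (h : Step Net Val c B a c') {i : Fin (Net.deg B)} (hpc : c.pc B = PC.loop i 0) :
    c'.pc B = PC.loop i 1 ∧ c'.rv B i = c.regW (Net.nbr B i) B := by
  classical
  cases h with
  | writeW i' v hpc' => rw [hpc'] at hpc; exact absurd hpc (by simp)
  | readNbrW i' hpc' =>
      rw [hpc'] at hpc
      obtain ⟨rfl, -⟩ : i' = i ∧ (0 : Fin 4) = 0 := by
        simpa [PC.loop.injEq] using hpc
      simp [Function.update_self]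
  | writeR i' hpc' =>
      rw [hpc'] at hpc
      simp only [PC.loop.injEq] at hpc
      exact absurd hpc.2 (by decide)
  | readNbrR i' hpc' =>
      rw [hpc'] at hpc
      simp only [PC.loop.injEq] at hpc
      exact absurd hpc.2 (by decide)
  | readOwnW i' hpc' =>
      rw [hpc'] at hpc
      simp only [PC.loop.injEq] at hpc
      exact absurd hpc.2 (by decide)

lemma inv_loop1 {c c' : Config Net Val} {B : Net.Proc} {a : Act Net.Proc Val}
    (h : Step Net Val c B a c') {i : Fin (Net.deg B)} (hpc : c.pc B = PC.loop i 1) :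
    c'.regR B (Net.nbr B i) = c.rv B i ∧ c'.regW = c.regW := by
  classical
  cases h with
  | writeW i' v hpc' => rw [hpc'] at hpc; exact absurd hpc (by simp)
  | readNbrW i' hpc' =>
      rw [hpc'] at hpc
      simp only [PC.loop.injEq] at hpc
      exact absurd hpc.2 (by decide)
  | writeR i' hpc' =>
      rw [hpc'] at hpc
      obtain ⟨rfl, -⟩ : i' = i ∧ (1 : Fin 4) = 1 := by
        simpa [PC.loop.injEq] using hpc
      refine ⟨?_, rfl⟩
      simp [upd2]
  | readNbrR i' hpc' =>
      rw [hpc'] at hpc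
      simp only [PC.loop.injEq] at hpc
      exact absurd hpc.2 (by decide)
  | readOwnW i' hpc' =>
      rw [hpc'] at hpc
      simp only [PC.loop.injEq] at hpc
      exact absurd hpc.2 (by decide)

lemma stable (e : Exec Net Val) (B : Net.Proc) {s b : ℕ} (hsb : s ≤ b)
    (h : ∀ v, s ≤ v → v < b → e.sched v ≠ B) :
    (e.cfg b).pc B = (e.cfg s).pc B ∧ (e.cfg b).rv B = (e.cfg s).rv B := by
  induction b, hsb using Nat.le_induction with
  | base => exact ⟨rfl, rfl⟩
  | succ b hsb ih =>
      have hB : B ≠ e.sched b := fun hh => h b hsb (Nat.lt_succ_self b) hh.symm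
      obtain ⟨h1, h2⟩ := ih (fun v hv1 hv2 => h v hv1 (Nat.lt_succ_of_lt hv2))
      exact ⟨(step_pc_ne (e.step b) hB).trans h1, (step_rv_ne (e.step b) hB).trans h2⟩

lemma regW_const (e : Exec Net Val) (A B : Net.Proc) {s b : ℕ} (hsb : s ≤ b)
    (hloop : ∀ u, s ≤ u → InLoop (e.cfg u) A) :
    (e.cfg b).regW A B = (e.cfg s).regW A B := by
  induction b, hsb using Nat.le_induction with
  | base => rfl
  | succ b hsb ih =>
      have hx : ∀ i, (e.cfg b).pc A ≠ PC.write i := by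
        obtain ⟨i', k', hh⟩ := hloop b hsb
        intro i hi
        rw [hi] at hh
        cases hh
      exact (step_regW_eq (e.step b) A B hx).trans ih

lemma reach_loop0 (e : Exec Net Val) (B : Net.Proc)
    (hsched : ∀ s, ∃ u, s ≤ u ∧ e.sched u = B)
    (j : Fin (Net.deg B)) (t : ℕ) :
    ∃ u, t ≤ u ∧ e.sched u = B ∧ (e.cfg u).pc B = PC.loop j 0 := by
  classical
  obtain ⟨u0, hu0, hB0⟩ := hsched t
  suffices H : ∀ m : ℕ, ∀ u, t ≤ u → e.sched u = B → V ((e.cfg u).pc B) j.1 ≤ m →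
      ∃ u', t ≤ u' ∧ e.sched u' = B ∧ (e.cfg u').pc B = PC.loop j 0 by
    exact H _ u0 hu0 hB0 le_rfl
  intro m
  induction m with
  | zero =>
      intro u htu hB hV
      by_cases hpc : (e.cfg u).pc B = PC.loop j 0
      · exact ⟨u, htu, hB, hpc⟩
      · have hstep := e.step u
        rw [hB] at hstep
        have := step_V_lt hstep j hpc
        omega
  | succ m ih =>
      intro u htu hB hV
      by_cases hpc : (e.cfg u).pc B = PC.loop j 0
      · exact ⟨u, htu, hB, hpc⟩
      · have hstep := e.step u
        rw [hB] at hstep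
        have hlt := step_V_lt hstep j hpc
        obtain ⟨w, hw, hwB⟩ := hsched (u + 1)
        have hPex : ∃ w, u + 1 ≤ w ∧ e.sched w = B := ⟨w, hw, hwB⟩
        have hw0 := Nat.find_spec hPex
        have hmin : ∀ v, u + 1 ≤ v → v < Nat.find hPex → e.sched v ≠ B :=
          fun v hv1 hv2 hvB => Nat.find_min hPex hv2 ⟨hv1, hvB⟩
        have hst := (stable e B hw0.1 hmin).1
        refine ih (Nat.find hPex) (by omega) hw0.2 ?_
        rw [hst]
        omega

end RC

open RC in
/-- Let `A` be a process whose program counter is inside the repeat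
loop of the Read Checking protocol and let `B` be a neighbour of `A`.  From any
configuration, every (fair) execution eventually reaches a configuration in which
either `B` allows `A` to write (`Read_{BA} = Write_{AB}`), or `A` has exited the
repeat loop. -/
theorem read_checking_eventually_allowed_or_exit (Net : Network) (Val : Type)
    (e : Exec Net Val) (hfair : e.Fair) (A B : Net.Proc) (hAB : Neighbour Net A B)
    (t : ℕ) (hloop : InLoop (e.cfg t) A) :
    ∃ u, t ≤ u ∧ (Allows (e.cfg u) B A ∨ ¬ InLoop (e.cfg u) A) := by
  classical
  by_contra hcon
  push_neg at hcon
  have hnA : ∀ u, t ≤ u → ¬ Allows (e.cfg u) B A := fun u hu => (hcon u hu).1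
  have hloopA : ∀ u, t ≤ u → InLoop (e.cfg u) A := fun u hu => (hcon u hu).2
  have v0 : Val := (e.cfg 0).regW A A
  obtain ⟨iA, hiA⟩ := hAB
  subst hiA
  set B := Net.nbr A iA with hBdef
  have hschedB : ∀ s, ∃ u, s ≤ u ∧ e.sched u = B :=
    fun s => hfair B s (fun u _ => enabled_all (e.cfg u) v0 B)
  obtain ⟨j, hj⟩ := Net.nbr_symm A iA
  -- hj : Net.nbr B j = A
  obtain ⟨u1, hu1t, hu1B, hu1pc⟩ := reach_loop0 e B hschedB j t
  have hs1 := e.step u1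
  rw [hu1B] at hs1
  obtain ⟨hpc1, hrv1⟩ := inv_loop0 hs1 hu1pc
  have hPex : ∃ w, u1 + 1 ≤ w ∧ e.sched w = B := hschedB (u1 + 1)
  have hw0 := Nat.find_spec hPex
  set u2 := Nat.find hPex with hu2def
  have hmin : ∀ v, u1 + 1 ≤ v → v < u2 → e.sched v ≠ B :=
    fun v hv1 hv2 hvB => Nat.find_min hPex hv2 ⟨hv1, hvB⟩
  obtain ⟨hst_pc, hst_rv⟩ := stable e B hw0.1 hmin
  have hs2 := e.step u2
  rw [hw0.2] at hs2
  have hpc2 : (e.cfg u2).pc B = PC.loop j 1 := hst_pc.trans hpc1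
  obtain ⟨hregR, -⟩ := inv_loop1 hs2 hpc2
  have hA1 : t ≤ u2 + 1 := by omega
  refine hnA (u2 + 1) hA1 ?_
  show (e.cfg (u2 + 1)).regR B A = (e.cfg (u2 + 1)).regW A B
  have e1 : (e.cfg (u2 + 1)).regR B A = (e.cfg u2).rv B j := by rw [← hj]; exact hregR
  have e2 : (e.cfg u2).rv B j = (e.cfg (u1 + 1)).rv B j := by rw [hst_rv]
  have e3 : (e.cfg (u1 + 1)).rv B j = (e.cfg u1).regW A B := by rw [hrv1, hj]
  have e4 : (e.cfg u1).regW A B = (e.cfg t).regW A B := regW_const e A B hu1t hloopA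
  have e5 : (e.cfg (u2 + 1)).regW A B = (e.cfg t).regW A B :=
    regW_const e A B (by omega) hloopA
  rw [e1, e2, e3, e4, ← e5]
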